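/- Let R be any Bézout domain. Then every prime ideal P* of the polynomial ring R[X] whose contraction to R is the zero ideal (i.e., P* ∩ R = 0) is the radical of a principal ideal of R[X]. -/

import Mathlib

open Polynomial

/-- The height of an ideal: the infimum of the heights (in the prime spectrum)
of the prime ideals containing it. -/
noncomputable def idealHeight {A : Type*} [CommRing A] (I : Ideal A) : ℕ∞ :=
  ⨅ (P : PrimeSpectrum A) (_ : I ≤ P.asIdeal), Order.height P

/-- An ideal `I` of a commutative ring is a set theoretic complete intersection if there
exist `n` elements, with `n` the height of `I`, such that the radical of `I` equals the
radical of the ideal they generate. -/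
def IsSTCI {A : Type*} [CommRing A] (I : Ideal A) : Prop :=
  ∃ n : ℕ, (n : ℕ∞) = idealHeight I ∧
    ∃ a : Fin n → A, I.radical = (Ideal.span (Set.range a)).radical

section Aux

variable {R : Type*} [CommRing R] [IsDomain R] [IsBezout R]

/-- In a Bézout domain, the ideal generated by the coefficients of a polynomial is
principal, and its generator divides the polynomial (as a constant). -/
theorem exists_content (p : R[X]) :
    ∃ c : R, Ideal.span (↑p.coeffs : Set R) = Ideal.span {c} ∧ C c ∣ p := by
  have hfg : (Ideal.span (↑p.coeffs : Set R)).FG :=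
    ⟨p.coeffs, rfl⟩
  obtain ⟨c, hc⟩ := IsBezout.isPrincipal_of_FG _ hfg
  have hc' : Ideal.span (↑p.coeffs : Set R) = Ideal.span {c} := hc
  refine ⟨c, hc', ?_⟩
  rw [C_dvd_iff_dvd_coeff]
  intro i
  rw [← Ideal.mem_span_singleton, ← hc']
  by_cases h : p.coeff i = 0
  · simp [h]
  · exact Ideal.subset_span (p.coeff_mem_coeffs h)

/-- Every nonzero polynomial over a Bézout domain is a constant times a primitive
polynomial. -/
theorem exists_primPart (s : R[X]) (hs : s ≠ 0) :
    ∃ (b : R) (s₁ : R[X]), b ≠ 0 ∧ s = C b * s₁ ∧ s₁.IsPrimitive := by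
  obtain ⟨b, hspan, hdvd⟩ := exists_content s
  obtain ⟨s₁, hs₁⟩ := hdvd
  have hb : b ≠ 0 := by
    rintro rfl
    simp only [map_zero, zero_mul] at hs₁
    exact hs hs₁
  refine ⟨b, s₁, hb, hs₁, ?_⟩
  intro r hr
  -- `C (b*r) ∣ s`, so `b*r` divides all coefficients of `s`, hence `b*r ∣ b`.
  obtain ⟨t, ht⟩ := hr
  have hbr : C (b * r) ∣ s := ⟨t, by rw [hs₁, ht, map_mul]; ring⟩
  have hle : Ideal.span (↑s.coeffs : Set R) ≤ Ideal.span ({b * r} : Set R) := by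
    rw [Ideal.span_le]
    intro x hx
    simp only [SetLike.mem_coe]
    obtain ⟨n, _, rfl⟩ := Polynomial.mem_coeffs_iff.mp hx
    exact Ideal.mem_span_singleton.mpr ((C_dvd_iff_dvd_coeff _ _).mp hbr n)
  have hmem : b ∈ Ideal.span ({b * r} : Set R) := by
    refine hle ?_
    rw [hspan]
    exact Ideal.subset_span rfl
  obtain ⟨u, hu⟩ := Ideal.mem_span_singleton.mp hmem
  have : (1 : R) = r * u := by
    apply mul_left_cancel₀ hb
    rw [mul_one, ← mul_assoc]
    exact hu
  exact IsUnit.of_mul_eq_one (a := r) u this.symm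

/-- A primitive polynomial over a Bézout domain has coefficients generating the
unit ideal. -/
theorem span_coeffs_eq_top {p : R[X]} (hp : p.IsPrimitive) :
    Ideal.span (↑p.coeffs : Set R) = ⊤ := by
  obtain ⟨c, hspan, hdvd⟩ := exists_content p
  rw [hspan, Ideal.span_singleton_eq_top]
  exact hp c hdvd

/-- Gauss's lemma for Bézout domains: the product of primitive polynomials is
primitive. -/
theorem isPrimitive_mul {p q : R[X]} (hp : p.IsPrimitive) (hq : q.IsPrimitive) :
    (p * q).IsPrimitive := by
  intro r hr
  by_contra hru
  obtain ⟨M, hM, hrM⟩ := Ideal.exists_le_maximal (Ideal.span {r})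
    (by rwa [Ne, Ideal.span_singleton_eq_top])
  have hrM' : r ∈ M := hrM (Ideal.subset_span rfl)
  have hmap : (p * q).map (Ideal.Quotient.mk M) = 0 := by
    ext n
    rw [coeff_map, coeff_zero, Ideal.Quotient.eq_zero_iff_mem]
    obtain ⟨d, hd⟩ := (C_dvd_iff_dvd_coeff r (p * q)).mp hr n
    rw [hd]
    exact Ideal.mul_mem_right _ _ hrM'
  rw [Polynomial.map_mul] at hmap
  haveI := hM.isPrime
  rcases mul_eq_zero.mp hmap with h | h
  · have hle : Ideal.span (↑p.coeffs : Set R) ≤ M := by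
      rw [Ideal.span_le]
      intro x hx
      simp only [SetLike.mem_coe]
      obtain ⟨n, _, rfl⟩ := Polynomial.mem_coeffs_iff.mp hx
      rw [← Ideal.Quotient.eq_zero_iff_mem, ← coeff_map, h, coeff_zero]
    rw [span_coeffs_eq_top hp] at hle
    exact hM.ne_top (top_le_iff.mp hle)
  · have hle : Ideal.span (↑q.coeffs : Set R) ≤ M := by
      rw [Ideal.span_le]
      intro x hx
      simp only [SetLike.mem_coe]
      obtain ⟨n, _, rfl⟩ := Polynomial.mem_coeffs_iff.mp hx
      rw [← Ideal.Quotient.eq_zero_iff_mem, ← coeff_map, h, coeff_zero]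
    rw [span_coeffs_eq_top hq] at hle
    exact hM.ne_top (top_le_iff.mp hle)

/-- Gauss's divisibility lemma for Bézout domains: if `p` is primitive and
`C a * q = p * s` with `a ≠ 0`, then `p ∣ q`. -/
theorem primitive_dvd_of_C_mul_eq {p q s : R[X]} {a : R} (hp : p.IsPrimitive)
    (ha : a ≠ 0) (h : C a * q = p * s) : p ∣ q := by
  rcases eq_or_ne q 0 with rfl | hq
  · exact dvd_zero p
  have hCa : (C a : R[X]) ≠ 0 := by simpa using ha
  have hs : s ≠ 0 := by
    rintro rfl
    rw [mul_zero] at h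
    exact mul_ne_zero hCa hq h
  obtain ⟨b, s₁, hb, rfl, hs₁⟩ := exists_primPart s hs
  have hps₁ : (p * s₁).IsPrimitive := isPrimitive_mul hp hs₁
  have h' : C a * q = C b * (p * s₁) := by rw [h]; ring
  -- `a` divides `b * coeff (p*s₁) i` for every `i`; since the coefficients of
  -- `p * s₁` generate the unit ideal, `a ∣ b`.
  have hco : ∀ i, a ∣ b * (p * s₁).coeff i := by
    intro i
    have := (C_dvd_iff_dvd_coeff a (C b * (p * s₁))).mp ⟨q, h'.symm⟩ i
    rwa [coeff_C_mul] at this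
  have hab : a ∣ b := by
    have h1 : (1 : R) ∈ Ideal.span (↑(p * s₁).coeffs : Set R) := by
      rw [span_coeffs_eq_top hps₁]; trivial
    have key : ∀ x ∈ Ideal.span (↑(p * s₁).coeffs : Set R), a ∣ b * x := by
      intro x hx
      refine Submodule.span_induction ?_ ?_ ?_ ?_ hx
      · intro y hy
        obtain ⟨n, _, rfl⟩ := Polynomial.mem_coeffs_iff.mp hy
        exact hco n
      · simp
      · intro y z _ _ hy hz
        rw [mul_add]; exact dvd_add hy hz
      · intro r y _ hy
        rw [smul_eq_mul, mul_comm r y, ← mul_assoc]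
        exact Dvd.dvd.mul_right hy r
    simpa using key 1 h1
  obtain ⟨t, rfl⟩ := hab
  have : C a * q = C a * (C t * (p * s₁)) := by
    rw [h', map_mul]; ring
  have hq' : q = C t * (p * s₁) := mul_left_cancel₀ hCa this
  exact ⟨C t * s₁, by rw [hq']; ring⟩

end Aux

/-- Over any Bézout domain `R`, every prime ideal of `R[X]` contracting to the zero ideal
of `R` is the radical of a principal ideal. -/
theorem stmt_7 (R : Type*) [CommRing R] [IsDomain R] [IsBezout R]
    (P : Ideal R[X]) (hP : P.IsPrime)
    (h0 : P.comap (Polynomial.C : R →+* R[X]) = ⊥) :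
    ∃ f : R[X], P = (Ideal.span {f}).radical := by
  classical
  rcases eq_or_ne P ⊥ with rfl | hPbot
  · refine ⟨0, ?_⟩
    rw [Set.singleton_zero, Ideal.span_zero, Ideal.bot_prime.radical]
  -- Choose a nonzero element of `P` of minimal degree.
  have hex : ∃ n : ℕ, ∃ q : R[X], q ∈ P ∧ q ≠ 0 ∧ q.natDegree = n := by
    obtain ⟨q, hqP, hq0⟩ := Submodule.exists_mem_ne_zero_of_ne_bot hPbot
    exact ⟨q.natDegree, q, hqP, hq0, rfl⟩
  obtain ⟨p₁, hp₁P, hp₁0, hp₁deg⟩ := Nat.find_spec hex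
  have hmin : ∀ r : R[X], r ∈ P → r ≠ 0 → Nat.find hex ≤ r.natDegree := by
    intro r hrP hr0
    exact Nat.find_min' hex ⟨r, hrP, hr0, rfl⟩
  -- Extract a primitive polynomial `p ∈ P` of the same minimal degree.
  obtain ⟨c, p, hc0, hp₁eq, hpprim⟩ := exists_primPart p₁ hp₁0
  have hCc : (C c : R[X]) ∉ P := by
    intro hmem
    have : c ∈ P.comap (Polynomial.C : R →+* R[X]) := hmem
    rw [h0] at this
    exact hc0 this
  have hpP : p ∈ P := by
    rw [hp₁eq] at hp₁P
    rcases hP.mem_or_mem hp₁P with h | h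
    · exact absurd h hCc
    · exact h
  have hp0 : p ≠ 0 := by
    rintro rfl
    rw [mul_zero] at hp₁eq
    exact hp₁0 hp₁eq
  have hpdeg : p.natDegree = Nat.find hex := by
    rw [← hp₁deg, hp₁eq, natDegree_C_mul hc0]
  -- Show `P = span {p}` by division in `Frac(R)[X]`.
  have hspan : Ideal.span ({p} : Set R[X]) = P := by
    refine le_antisymm ((Ideal.span_singleton_le_iff_mem P).mpr hpP) ?_
    intro q hqP
    rw [Ideal.mem_span_singleton]
    -- Work in `K[X]` with `K = Frac R`.
    set K := FractionRing R
    have hinj : Function.Injective (algebraMap R K) := IsFractionRing.injective R K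
    have hmapinj : Function.Injective (Polynomial.map (algebraMap R K)) :=
      Polynomial.map_injective _ hinj
    have hpK0 : p.map (algebraMap R K) ≠ 0 := by
      intro h
      exact hp0 (hmapinj (by simpa using h))
    set pm : K[X] := p.map (algebraMap R K) * C (p.map (algebraMap R K)).leadingCoeff⁻¹
      with hpm
    have hmonic : pm.Monic := monic_mul_leadingCoeff_inv hpK0
    set g : K[X] := C (p.map (algebraMap R K)).leadingCoeff⁻¹ *
      (q.map (algebraMap R K) /ₘ pm) with hg
    have hdiv : q.map (algebraMap R K) = p.map (algebraMap R K) * g +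
        q.map (algebraMap R K) %ₘ pm := by
      conv_lhs => rw [← modByMonic_add_div (q.map (algebraMap R K)) pm]
      rw [hpm, hg]; ring
    obtain ⟨⟨a, haR⟩, hanorm⟩ := IsLocalization.integerNormalization_map_to_map (nonZeroDivisors R) g
    have ha0 : a ≠ 0 := mem_nonZeroDivisors_iff_ne_zero.mp haR
    set s : R[X] := IsLocalization.integerNormalization (nonZeroDivisors R) g with hs
    set r : R[X] := C a * q - p * s with hr
    have hrP : r ∈ P := by
      refine Ideal.sub_mem P (Ideal.mul_mem_left P _ hqP) (Ideal.mul_mem_right s P hpP)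
    have hrmap : r.map (algebraMap R K) =
        C (algebraMap R K a) * (q.map (algebraMap R K) %ₘ pm) := by
      have hsg : s.map (algebraMap R K) = C (algebraMap R K a) * g := by
        rw [hanorm, ← smul_eq_C_mul, algebraMap_smul]
      have hsub : q.map (algebraMap R K) - p.map (algebraMap R K) * g =
          q.map (algebraMap R K) %ₘ pm := by
        conv_lhs => rw [hdiv]
        ring
      rw [hr, Polynomial.map_sub, Polynomial.map_mul, Polynomial.map_mul, map_C, hsg, ← hsub]
      ring
    have hA0 : algebraMap R K a ≠ 0 := fun h => ha0 (hinj (by simpa using h))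
    rcases eq_or_ne (q.map (algebraMap R K) %ₘ pm) 0 with hrem | hrem
    · -- remainder zero: `C a * q = p * s`, conclude via Gauss
      have : r = 0 := by
        apply hmapinj
        rw [hrmap, hrem, mul_zero, Polynomial.map_zero]
      have heq : C a * q = p * s := by
        have := sub_eq_zero.mp (hr ▸ this)
        exact this
      exact primitive_dvd_of_C_mul_eq hpprim ha0 heq
    · -- nonzero remainder would contradict minimality of `deg p`
      exfalso
      have hr0 : r ≠ 0 := by
        intro h
        rw [h, Polynomial.map_zero] at hrmap
        exact hrem (by
          rcases mul_eq_zero.mp hrmap.symm with h' | h'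
          · exact absurd h' (by simpa using hA0)
          · exact h')
      have hdeglt : r.degree < p.degree := by
        have h1 : (r.map (algebraMap R K)).degree = r.degree :=
          degree_map_eq_of_injective hinj r
        have h2 : (C (algebraMap R K a) * (q.map (algebraMap R K) %ₘ pm)).degree =
            (q.map (algebraMap R K) %ₘ pm).degree := by
          rw [degree_C_mul hA0]
        have h3 : (q.map (algebraMap R K) %ₘ pm).degree < pm.degree :=
          degree_modByMonic_lt _ hmonic
        have h4 : pm.degree = p.degree := by
          rw [hpm, degree_mul, degree_C (inv_ne_zero (leadingCoeff_ne_zero.mpr hpK0)),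
            add_zero, degree_map_eq_of_injective hinj]
        calc r.degree = (r.map (algebraMap R K)).degree := h1.symm
          _ = (q.map (algebraMap R K) %ₘ pm).degree := by rw [hrmap, h2]
          _ < pm.degree := h3
          _ = p.degree := h4
      have := hmin r hrP hr0
      have hlt : r.natDegree < p.natDegree := natDegree_lt_natDegree hr0 hdeglt
      omega
  exact ⟨p, ((congrArg Ideal.radical hspan).trans hP.radical).symm⟩
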